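/- Let x_0 be the family with (x_0)_{−k} = −C_{−k} for all k ≥ 1, and for k ≥ 1 set D_{−k} := σ_{−k}(x_0) + C_{−k}. Then: (i) if D_{−k} ≤ 0, then C_{−k} = 0; (ii) if D_{−k} > 0, then D_{−k} = (−(k−1)λ_1 − kλ_2)_+ = C_{−k}. -/

import Mathlib

noncomputable section

/-- `C_{−k} = (−(k−1)λ_1 − kλ_2)_+`, type `A_1^{(1)}`. -/
def CB (lam1 lam2 k : ℤ) : ℤ := max 0 (-(k - 1) * lam1 - k * lam2)

/-- `σ_{−k}(x) = −λ_{ε(k)} + x_{−k} + Σ_{m=1}^{k−1} c_{k,m} x_{−m}` where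
`ε(k) = 2` for `k` odd, `ε(k) = 1` for `k` even, and `c_{k,m} = 2` if
`k ≡ m (mod 2)`, `c_{k,m} = −2` otherwise; here `x m` denotes the
coordinate `x_{−m}`. -/
def sigmaB (lam1 lam2 : ℤ) (x : ℤ → ℤ) (k : ℤ) : ℤ :=
  -(if k % 2 = 0 then lam1 else lam2) + x k +
    ∑ m ∈ Finset.Icc 1 (k - 1), (if k % 2 = m % 2 then 2 else -2) * x m

end

lemma D_formula (lam1 lam2 : ℤ) (D : ℤ → ℤ)
    (hD : ∀ k : ℤ, D k =
      sigmaB lam1 lam2 (fun m => -CB lam1 lam2 m) k + CB lam1 lam2 k)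
    (k : ℤ) :
    D k = -(if k % 2 = 0 then lam1 else lam2)
      - ∑ m ∈ Finset.Icc 1 (k - 1), (if k % 2 = m % 2 then 2 else -2) * CB lam1 lam2 m := by
  rw [hD, sigmaB]
  have h : ∀ m : ℤ, (if k % 2 = m % 2 then (2:ℤ) else -2) * (-CB lam1 lam2 m)
      = -((if k % 2 = m % 2 then (2:ℤ) else -2) * CB lam1 lam2 m) := fun m => mul_neg _ _
  simp only [h, Finset.sum_neg_distrib]
  ring

lemma D_rec (lam1 lam2 : ℤ) (D : ℤ → ℤ)
    (hD : ∀ k : ℤ, D k =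
      sigmaB lam1 lam2 (fun m => -CB lam1 lam2 m) k + CB lam1 lam2 k)
    (k : ℤ) (hk : 1 ≤ k) :
    D (k + 1) = -(lam1 + lam2) + 2 * CB lam1 lam2 k - D k := by
  have h1 := D_formula lam1 lam2 D hD k
  have h2 := D_formula lam1 lam2 D hD (k + 1)
  have hins : Finset.Icc (1:ℤ) (k + 1 - 1) = insert k (Finset.Icc 1 (k - 1)) := by
    ext m; simp only [Finset.mem_Icc, Finset.mem_insert]; omega
  have hnot : k ∉ Finset.Icc (1:ℤ) (k - 1) := by simp
  rw [hins, Finset.sum_insert hnot] at h2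
  have hkk : ¬ ((k + 1) % 2 = k % 2) := by omega
  rw [if_neg hkk] at h2
  have hsum : ∑ m ∈ Finset.Icc 1 (k - 1), (if (k + 1) % 2 = m % 2 then (2:ℤ) else -2) * CB lam1 lam2 m
      = -∑ m ∈ Finset.Icc 1 (k - 1), (if k % 2 = m % 2 then (2:ℤ) else -2) * CB lam1 lam2 m := by
    rw [← Finset.sum_neg_distrib]
    refine Finset.sum_congr rfl fun m _ => ?_
    by_cases hc : k % 2 = m % 2
    · have hc' : ¬ ((k + 1) % 2 = m % 2) := by omega
      simp [hc, hc']
    · have hc' : (k + 1) % 2 = m % 2 := by omega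
      simp [hc, hc']
  rw [hsum] at h2
  have hlam : (if (k + 1) % 2 = 0 then lam1 else lam2) + (if k % 2 = 0 then lam1 else lam2)
      = lam1 + lam2 := by
    by_cases hp : k % 2 = 0
    · have hp' : ¬ ((k + 1) % 2 = 0) := by omega
      simp [hp, hp']; ring
    · have hp' : (k + 1) % 2 = 0 := by omega
      simp [hp, hp']
  rw [h2, h1]
  linarith [hlam]

theorem D_le_zero_imp_C_eq_zero_and_D_pos_imp_D_eq_C_A_1_1
    (lam1 lam2 : ℤ) (h1 : 0 < lam1) (h2 : lam2 ≤ 0) (hlev : 0 < lam1 + lam2)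
    (D : ℤ → ℤ)
    (hD : ∀ k : ℤ, D k =
      sigmaB lam1 lam2 (fun m => -CB lam1 lam2 m) k + CB lam1 lam2 k) :
    ∀ k : ℤ, 1 ≤ k →
      (D k ≤ 0 → CB lam1 lam2 k = 0) ∧
      (0 < D k → D k = max 0 (-(k - 1) * lam1 - k * lam2) ∧
        D k = CB lam1 lam2 k) := by
  have key : ∀ k : ℤ, 1 ≤ k →
      (D k = -(k - 1) * lam1 - k * lam2 ∧ 0 ≤ -(k - 1) * lam1 - k * lam2) ∨
      (-(k - 1) * lam1 - k * lam2 < 0 ∧ -(lam1 + lam2) ≤ D k ∧ D k ≤ 0) := by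
    intro k hk
    refine Int.le_induction (motive := fun k _ =>
        (D k = -(k - 1) * lam1 - k * lam2 ∧ 0 ≤ -(k - 1) * lam1 - k * lam2) ∨
        (-(k - 1) * lam1 - k * lam2 < 0 ∧ -(lam1 + lam2) ≤ D k ∧ D k ≤ 0)) ?_ ?_ k hk
    · -- base
      have hb := D_formula lam1 lam2 D hD 1
      have hempty : Finset.Icc (1:ℤ) (1 - 1) = ∅ := by
        apply Finset.Icc_eq_empty; omega
      rw [hempty, Finset.sum_empty] at hb
      norm_num at hb
      left
      constructor
      · rw [hb]; ring
      · nlinarith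
    · intro k hk ih
      have hrec := D_rec lam1 lam2 D hD k hk
      have hstep : -(k + 1 - 1) * lam1 - (k + 1) * lam2
          = (-(k - 1) * lam1 - k * lam2) - (lam1 + lam2) := by ring
      rcases ih with ⟨hDk, hf⟩ | ⟨hf, hlo, hhi⟩
      · have hC : CB lam1 lam2 k = -(k - 1) * lam1 - k * lam2 := by
          unfold CB; exact max_eq_right hf
        by_cases hpos : 0 ≤ -(k + 1 - 1) * lam1 - (k + 1) * lam2
        · left
          exact ⟨by rw [hrec, hC, hDk]; linarith [hstep], hpos⟩
        · right
          refine ⟨by linarith, ?_, ?_⟩ <;> rw [hrec, hC, hDk] <;> linarith [hstep]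
      · have hC : CB lam1 lam2 k = 0 := by
          unfold CB; exact max_eq_left hf.le
        right
        exact ⟨by linarith [hstep], by rw [hrec, hC]; linarith,
          by rw [hrec, hC]; linarith⟩
  intro k hk
  have hC : CB lam1 lam2 k = max 0 (-(k - 1) * lam1 - k * lam2) := rfl
  rcases key k hk with ⟨hDk, hf⟩ | ⟨hf, hlo, hhi⟩
  · constructor
    · intro h
      rw [hC, ← hDk]
      omega
    · intro h
      rw [hC, ← hDk]
      omega
  · constructor
    · intro _
      rw [hC]
      exact max_eq_left hf.le
    · intro h
      omega
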